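/- Let f_1, …, f_N : ℝ^d → ℝ be convex differentiable functions whose gradients are each L-Lipschitz continuous, let f = (1/N)·Σ_{i=1}^N f_i, let w* be a global minimizer of f, and let α > 0. Then for every w, w̃ ∈ ℝ^d, (1/N)·Σ_{i=1}^N ‖w − α(∇f_i(w) − ∇f_i(w̃) + ∇f(w̃)) − w*‖² ≤ ‖w − w*‖² − 2α(1 − 2Lα)·(f(w) − f(w*)) + 4Lα²·(f(w̃) − f(w*)). -/

import Mathlib

open scoped BigOperators

open InnerProductSpace Set
open scoped RealInnerProductSpace

variable {E : Type*} [NormedAddCommGroup E] [InnerProductSpace ℝ E] [CompleteSpace E]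

lemma lineDeriv_aux (g : E → ℝ) (hg : Differentiable ℝ g) (x v : E) (t : ℝ) :
    HasDerivAt (fun s : ℝ => g (x + s • v)) ⟪gradient g (x + t • v), v⟫ t := by
  have hc : HasDerivAt (fun s : ℝ => x + s • v) v t := by
    simpa using ((hasDerivAt_id t).smul_const v).const_add x
  have hfd : HasFDerivAt g (toDual ℝ E (gradient g (x + t • v))) (x + t • v) :=
    hasGradientAt_iff_hasFDerivAt.mp (hg _).hasGradientAt
  simpa [toDual_apply_apply, Function.comp_def] using hfd.comp_hasDerivAt t hc

lemma convex_lower (g : E → ℝ) (hc : ConvexOn ℝ Set.univ g) (hg : Differentiable ℝ g)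
    (x y : E) : g x + ⟪gradient g x, y - x⟫ ≤ g y := by
  set φ : ℝ → ℝ := fun t => g (x + t • (y - x)) with hφ
  have hconvφ : ConvexOn ℝ Set.univ φ := by
    have := hc.comp_affineMap (AffineMap.lineMap x y : ℝ →ᵃ[ℝ] E)
    simp only [Set.preimage_univ] at this
    have e : φ = g ∘ ⇑(AffineMap.lineMap x y : ℝ →ᵃ[ℝ] E) := by
      funext t
      simp [φ, AffineMap.lineMap_apply, add_comm, vsub_eq_sub, vadd_eq_add]
    rw [e]; exact this
  have hd : HasDerivAt φ ⟪gradient g x, y - x⟫ 0 := by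
    simpa using lineDeriv_aux g hg x (y - x) 0
  have := hconvφ.le_slope_of_hasDerivAt (mem_univ (0:ℝ)) (mem_univ (1:ℝ)) zero_lt_one hd
  rw [slope_def_field] at this
  have h0 : φ 0 = g x := by simp [φ]
  have h1 : φ 1 = g y := by simp [φ]
  rw [h0, h1] at this
  simp at this
  have e : ⟪gradient g x, y - x⟫ = fderiv ℝ g x y - fderiv ℝ g x x := by simp [inner_sub_right]
  linarith

lemma descent_lemma (g : E → ℝ) (hg : Differentiable ℝ g) {L : ℝ}
    (hlip : ∀ a b, ‖gradient g a - gradient g b‖ ≤ L * ‖a - b‖) (x y : E) :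
    g y ≤ g x + ⟪gradient g x, y - x⟫ + L / 2 * ‖y - x‖ ^ 2 := by
  set v : E := y - x with hv
  set A : ℝ := ⟪gradient g x, v⟫ with hA
  set B : ℝ := L / 2 * ‖v‖ ^ 2 with hB
  set ψ : ℝ → ℝ := fun t => g (x + t • v) - t * A - t ^ 2 * B with hψ
  have hψd : ∀ t : ℝ, HasDerivAt ψ (⟪gradient g (x + t • v), v⟫ - A - 2 * t * B) t := by
    intro t
    have h1 := lineDeriv_aux g hg x v t
    have h2 : HasDerivAt (fun t : ℝ => t * A) A t := by
      simpa using (hasDerivAt_id t).mul_const A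
    have h3 : HasDerivAt (fun t : ℝ => t ^ 2 * B) (2 * t * B) t := by
      simpa [mul_comm] using (hasDerivAt_pow 2 t).mul_const B
    exact (h1.sub h2).sub h3
  have hdiffψ : Differentiable ℝ ψ := fun t => (hψd t).differentiableAt
  have hanti : AntitoneOn ψ (Icc 0 1) := by
    apply antitoneOn_of_deriv_nonpos (convex_Icc 0 1) hdiffψ.continuous.continuousOn
      (hdiffψ.differentiableOn)
    · intro t ht
      rw [interior_Icc] at ht
      rw [(hψd t).deriv]
      have hip : ⟪gradient g (x + t • v), v⟫ - A ≤ L * t * ‖v‖ ^ 2 := by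
        have e1 : ⟪gradient g (x + t • v), v⟫ - A = ⟪gradient g (x + t • v) - gradient g x, v⟫ := by
          rw [hA, inner_sub_left]
        rw [e1]
        calc ⟪gradient g (x + t • v) - gradient g x, v⟫
            ≤ ‖gradient g (x + t • v) - gradient g x‖ * ‖v‖ := real_inner_le_norm _ _
          _ ≤ (L * ‖(x + t • v) - x‖) * ‖v‖ := by
              exact mul_le_mul_of_nonneg_right (hlip _ _) (norm_nonneg _)
          _ = L * t * ‖v‖ ^ 2 := by
              rw [add_sub_cancel_left, norm_smul, Real.norm_eq_abs, abs_of_pos ht.1]; ring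
      have : 2 * t * B = L * t * ‖v‖ ^ 2 := by rw [hB]; ring
      linarith
  have h01 := hanti (by constructor <;> norm_num) (by constructor <;> norm_num) zero_le_one
  have hψ0 : ψ 0 = g x := by simp [hψ]
  have hψ1 : ψ 1 = g y - A - B := by simp [hψ, hv]
  rw [hψ0, hψ1] at h01
  linarith

lemma coco_lemma (g : E → ℝ) (hc : ConvexOn ℝ Set.univ g) (hg : Differentiable ℝ g) {L : ℝ}
    (hL : 0 ≤ L) (hlip : ∀ a b, ‖gradient g a - gradient g b‖ ≤ L * ‖a - b‖) (x y : E) :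
    ‖gradient g x - gradient g y‖ ^ 2 ≤ 2 * L * (g x - g y - ⟪gradient g y, x - y⟫) := by
  rcases hL.eq_or_lt with hL0 | hLpos
  · have h := hlip x y
    rw [← hL0] at h ⊢
    simp only [zero_mul] at h
    have : gradient g x - gradient g y = 0 := by
      rw [← norm_le_zero_iff]; exact h
    rw [this]; simp
  · set u : E := gradient g x - gradient g y with hu
    set z : E := x - L⁻¹ • u with hz
    have h1 := descent_lemma g hg hlip x z
    have h2 := convex_lower g hc hg y z
    have hzx : z - x = -(L⁻¹ • u) := by rw [hz]; abel
    have hzy : z - y = (x - y) - L⁻¹ • u := by rw [hz]; abel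
    rw [hzx] at h1
    rw [hzy] at h2
    rw [inner_neg_right, real_inner_smul_right] at h1
    rw [inner_sub_right, real_inner_smul_right] at h2
    have hnorm : ‖-(L⁻¹ • u)‖ ^ 2 = L⁻¹ ^ 2 * ‖u‖ ^ 2 := by
      rw [norm_neg, norm_smul, Real.norm_eq_abs, abs_of_pos (inv_pos.mpr hLpos), mul_pow]
    rw [hnorm] at h1
    have hiu : ⟪gradient g x, u⟫ - ⟪gradient g y, u⟫ = ‖u‖ ^ 2 := by
      rw [← inner_sub_left, ← hu, real_inner_self_eq_norm_sq]
    have hLinv : L * L⁻¹ = 1 := mul_inv_cancel₀ hLpos.ne'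
    have hiu2 : L⁻¹ * ⟪gradient g x, u⟫ - L⁻¹ * ⟪gradient g y, u⟫ = L⁻¹ * ‖u‖ ^ 2 := by
      rw [← mul_sub, hiu]
    have e2 : L / 2 * (L⁻¹ ^ 2 * ‖u‖ ^ 2) = 1 / 2 * (L⁻¹ * ‖u‖ ^ 2) := by
      field_simp
    have key : L⁻¹ * ‖u‖ ^ 2 ≤ 2 * (g x - g y - ⟪gradient g y, x - y⟫) := by
      linarith
    have final := mul_le_mul_of_nonneg_left key hLpos.le
    rw [← mul_assoc, hLinv, one_mul] at final
    linarith

lemma norm_sub_sq_le_two (a b : E) : ‖a - b‖ ^ 2 ≤ 2 * ‖a‖ ^ 2 + 2 * ‖b‖ ^ 2 := by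
  have h := norm_sub_le a b
  nlinarith [norm_nonneg (a - b), norm_nonneg a, norm_nonneg b, sq_nonneg (‖a‖ - ‖b‖)]

lemma gradient_avg {N : ℕ} (fi : Fin N → E → ℝ) (f : E → ℝ)
    (hdiff : ∀ i, Differentiable ℝ (fi i))
    (hf : ∀ x, f x = (N : ℝ)⁻¹ * ∑ i, fi i x) (x : E) :
    HasGradientAt f ((N : ℝ)⁻¹ • ∑ i, gradient (fi i) x) x := by
  have hsum : HasFDerivAt (fun x => ∑ i, fi i x) (∑ i, fderiv ℝ (fi i) x) x :=
    HasFDerivAt.fun_sum (fun i _ => (hdiff i x).hasFDerivAt)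
  have hmul := hsum.const_mul (N : ℝ)⁻¹
  have hfe : f = fun x => (N : ℝ)⁻¹ * ∑ i, fi i x := funext hf
  rw [hfe]
  have h2 := hasFDerivAt_iff_hasGradientAt.mp hmul
  have hvec : ((toDual ℝ E).symm ((N : ℝ)⁻¹ • ∑ i, fderiv ℝ (fi i) x) : E)
      = (N : ℝ)⁻¹ • ∑ i, gradient (fi i) x := by
    simp [gradient, map_sum]
  rwa [hvec] at h2


set_option maxHeartbeats 1000000 in
/-- **Single-step expected distance-decrease inequality for the SVRG update.**
If each `f_i : ℝ^d → ℝ` is convex and differentiable with `L`-Lipschitz gradient,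
`f = (1/N)·Σᵢ fᵢ`, `w*` is a global minimizer of `f`, and `α > 0`, then for every
`w, w̃`, `(1/N)·Σᵢ ‖w − α(∇fᵢ(w) − ∇fᵢ(w̃) + ∇f(w̃)) − w*‖²
  ≤ ‖w − w*‖² − 2α(1 − 2Lα)(f(w) − f(w*)) + 4Lα²(f(w̃) − f(w*))`. -/
theorem svrg_step_distance_decrease {d N : ℕ} (L α : ℝ)
    (fi : Fin N → EuclideanSpace ℝ (Fin d) → ℝ)
    (f : EuclideanSpace ℝ (Fin d) → ℝ)
    (hconv : ∀ i, ConvexOn ℝ Set.univ (fi i))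
    (hdiff : ∀ i, Differentiable ℝ (fi i))
    (hlip : ∀ i x y, ‖gradient (fi i) x - gradient (fi i) y‖ ≤ L * ‖x - y‖)
    (hf : ∀ x, f x = (N : ℝ)⁻¹ * ∑ i, fi i x)
    (wstar : EuclideanSpace ℝ (Fin d))
    (hmin : ∀ x, f wstar ≤ f x)
    (hα : 0 < α) :
    ∀ w wt, (N : ℝ)⁻¹ *
        ∑ i, ‖w - α • (gradient (fi i) w - gradient (fi i) wt + gradient f wt) - wstar‖ ^ 2
      ≤ ‖w - wstar‖ ^ 2 - 2 * α * (1 - 2 * L * α) * (f w - f wstar)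
        + 4 * L * α ^ 2 * (f wt - f wstar) := by
  intro w wt
  rcases Nat.eq_zero_or_pos N with hN0 | hNpos
  · subst hN0
    have hf0 : ∀ x, f x = 0 := fun x => by simp [hf x]
    simp only [hf0, Finset.univ_eq_empty, Finset.sum_empty, mul_zero, sub_zero, sub_self,
      add_zero]
    positivity
  rcases Nat.eq_zero_or_pos d with hd0 | hdpos
  · subst hd0
    have hww : ∀ a b : EuclideanSpace ℝ (Fin 0), a = b := fun a b => Subsingleton.elim a b
    have hnorm0 : ∀ a : EuclideanSpace ℝ (Fin 0), ‖a‖ = 0 := fun a => by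
      rw [hww a 0, norm_zero]
    have hfw : f w = f wstar := by rw [hww w wstar]
    have hft : f wt = f wstar := by rw [hww wt wstar]
    simp [hnorm0, hfw, hft]
  -- main case
  have hL : 0 ≤ L := by
    have i0 : Fin N := ⟨0, hNpos⟩
    have j0 : Fin d := ⟨0, hdpos⟩
    have h := hlip i0 (EuclideanSpace.single j0 (1 : ℝ)) 0
    rw [sub_zero, EuclideanSpace.norm_single] at h
    have := le_trans (norm_nonneg _) h
    simpa using this
  set c : ℝ := (N : ℝ)⁻¹ with hc
  have hNne : (N : ℝ) ≠ 0 := Nat.cast_ne_zero.mpr hNpos.ne'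
  have hcN : c * (N : ℝ) = 1 := inv_mul_cancel₀ hNne
  have hcnn : 0 ≤ c := by positivity
  set gi : Fin N → EuclideanSpace ℝ (Fin d) → EuclideanSpace ℝ (Fin d) :=
    fun i => gradient (fi i) with hgi
  have hgradf : ∀ x, HasGradientAt f (c • ∑ i, gi i x) x := fun x =>
    gradient_avg fi f hdiff hf x
  have hgf : ∀ x, gradient f x = c • ∑ i, gi i x := fun x => (hgradf x).gradient
  have hmin' : IsLocalMin f wstar := Filter.Eventually.of_forall hmin
  have hgrad0 : gradient f wstar = 0 := by
    rw [gradient, hmin'.fderiv_eq_zero, map_zero]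
  have hsum0 : c • ∑ i, gi i wstar = 0 := by rw [← hgf]; exact hgrad0
  set m : EuclideanSpace ℝ (Fin d) := gradient f wt with hm
  set v : Fin N → EuclideanSpace ℝ (Fin d) := fun i => gi i w - gi i wt + m with hv
  set a : EuclideanSpace ℝ (Fin d) := w - wstar with ha
  have hlow : ∀ i (x y : EuclideanSpace ℝ (Fin d)), fi i x + ⟪gi i x, y - x⟫ ≤ fi i y :=
    fun i => convex_lower _ (hconv i) (hdiff i)
  -- averaged first-order lower bound for f
  have havg_low : ∀ x y : EuclideanSpace ℝ (Fin d),
      f x + ⟪gradient f x, y - x⟫ ≤ f y := by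
    intro x y
    have hsl : ∑ i, fi i x + ∑ i, ⟪gi i x, y - x⟫ ≤ ∑ i, fi i y := by
      rw [← Finset.sum_add_distrib]
      exact Finset.sum_le_sum fun i _ => hlow i x y
    have hmy := mul_le_mul_of_nonneg_left hsl hcnn
    rw [mul_add, ← sum_inner, ← real_inner_smul_left] at hmy
    rw [hf x, hf y, hgf x]
    exact hmy
  -- averaged cocoercivity
  have hcocoavg : ∀ x, c * ∑ i, ‖gi i x - gi i wstar‖ ^ 2 ≤ 2 * L * (f x - f wstar) := by
    intro x
    have hco : ∀ i, ‖gi i x - gi i wstar‖ ^ 2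
        ≤ 2 * L * (fi i x - fi i wstar - ⟪gi i wstar, x - wstar⟫) := fun i =>
      coco_lemma _ (hconv i) (hdiff i) hL (hlip i) x wstar
    have hsum := Finset.sum_le_sum fun i (_ : i ∈ Finset.univ) => hco i
    have h2 := mul_le_mul_of_nonneg_left hsum hcnn
    refine le_trans h2 (le_of_eq ?_)
    have e1 : ∑ i, 2 * L * (fi i x - fi i wstar - ⟪gi i wstar, x - wstar⟫)
        = 2 * L * ((∑ i, fi i x) - (∑ i, fi i wstar) - ⟪∑ i, gi i wstar, x - wstar⟫) := by
      rw [← Finset.mul_sum, Finset.sum_sub_distrib, Finset.sum_sub_distrib, sum_inner]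
    have e2 : c * ⟪∑ i, gi i wstar, x - wstar⟫ = 0 := by
      rw [← real_inner_smul_left, hsum0, inner_zero_left]
    rw [e1, hf x, hf wstar]
    linear_combination (-2 * L) * e2
  -- expansion identity per i
  have hexp : ∀ i : Fin N, ‖w - α • v i - wstar‖ ^ 2
      = ‖a‖ ^ 2 - 2 * α * ⟪a, v i⟫ + α ^ 2 * ‖v i‖ ^ 2 := by
    intro i
    have e : w - α • v i - wstar = a - α • v i := by rw [ha]; abel
    rw [e, norm_sub_sq_real, real_inner_smul_right, norm_smul, Real.norm_eq_abs, mul_pow, sq_abs]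
    ring
  have hvsum : c • ∑ i, v i = gradient f w := by
    have e : ∑ i, v i = (∑ i, gi i w) - (∑ i, gi i wt) + (N : ℕ) • m := by
      simp [hv, Finset.sum_add_distrib, Finset.sum_sub_distrib]
    rw [e, smul_add, smul_sub, ← hgf w, ← hgf wt]
    have hNm : c • ((N : ℕ) • m) = m := by
      rw [← Nat.cast_smul_eq_nsmul ℝ, smul_smul, hcN, one_smul]
    rw [hNm, hm, sub_add_cancel]
  have hinner_sum : c * ∑ i, ⟪a, v i⟫ = ⟪a, gradient f w⟫ := by
    rw [← inner_sum, ← real_inner_smul_right, hvsum]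
  have hmain_eq : c * ∑ i, ‖w - α • v i - wstar‖ ^ 2
      = ‖a‖ ^ 2 - 2 * α * ⟪a, gradient f w⟫ + α ^ 2 * (c * ∑ i, ‖v i‖ ^ 2) := by
    rw [Finset.sum_congr rfl fun i _ => hexp i, Finset.sum_add_distrib,
      Finset.sum_sub_distrib, Finset.sum_const, Finset.card_univ, Fintype.card_fin,
      nsmul_eq_mul]
    have e1 : ∑ i, 2 * α * ⟪a, v i⟫ = 2 * α * ∑ i, ⟪a, v i⟫ := by
      rw [Finset.mul_sum]
    have e2 : ∑ i, α ^ 2 * ‖v i‖ ^ 2 = α ^ 2 * ∑ i, ‖v i‖ ^ 2 := by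
      rw [Finset.mul_sum]
    rw [e1, e2]
    linear_combination ‖a‖ ^ 2 * hcN - 2 * α * hinner_sum
  -- variance step
  have hAi : c • ∑ i, (gi i wt - gi i wstar) = m := by
    rw [Finset.sum_sub_distrib, smul_sub, ← hgf wt, hsum0, hm, sub_zero]
  have hvar_id : c * ∑ i, ‖(gi i wt - gi i wstar) - m‖ ^ 2
      ≤ c * ∑ i, ‖gi i wt - gi i wstar‖ ^ 2 := by
    have expand : ∀ i : Fin N, ‖(gi i wt - gi i wstar) - m‖ ^ 2
        = ‖gi i wt - gi i wstar‖ ^ 2 - 2 * ⟪gi i wt - gi i wstar, m⟫ + ‖m‖ ^ 2 := fun i => by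
      rw [norm_sub_sq_real]
    have hs : c * ∑ i, ⟪gi i wt - gi i wstar, m⟫ = ‖m‖ ^ 2 := by
      rw [← sum_inner, ← real_inner_smul_left, hAi, real_inner_self_eq_norm_sq]
    have heq : c * ∑ i, ‖(gi i wt - gi i wstar) - m‖ ^ 2
        = c * ∑ i, ‖gi i wt - gi i wstar‖ ^ 2 - ‖m‖ ^ 2 := by
      rw [Finset.sum_congr rfl fun i _ => expand i, Finset.sum_add_distrib,
        Finset.sum_sub_distrib, Finset.sum_const, Finset.card_univ, Fintype.card_fin,
        nsmul_eq_mul]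
      have e1 : ∑ i, 2 * ⟪gi i wt - gi i wstar, m⟫ = 2 * ∑ i, ⟪gi i wt - gi i wstar, m⟫ := by
        rw [Finset.mul_sum]
      rw [e1]
      linear_combination (-2 : ℝ) * hs + ‖m‖ ^ 2 * hcN
    rw [heq]
    nlinarith [sq_nonneg ‖m‖]
  have hvbound : ∀ i : Fin N, ‖v i‖ ^ 2
      ≤ 2 * ‖gi i w - gi i wstar‖ ^ 2 + 2 * ‖(gi i wt - gi i wstar) - m‖ ^ 2 := by
    intro i
    have e : v i = (gi i w - gi i wstar) - ((gi i wt - gi i wstar) - m) := by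
      simp only [hv]; abel
    rw [e]
    exact norm_sub_sq_le_two _ _
  have hvarsum : c * ∑ i, ‖v i‖ ^ 2
      ≤ 4 * L * (f w - f wstar) + 4 * L * (f wt - f wstar) := by
    have h1 := Finset.sum_le_sum fun i (_ : i ∈ Finset.univ) => hvbound i
    have h2 := mul_le_mul_of_nonneg_left h1 hcnn
    have e : c * ∑ i, (2 * ‖gi i w - gi i wstar‖ ^ 2 + 2 * ‖(gi i wt - gi i wstar) - m‖ ^ 2)
        = 2 * (c * ∑ i, ‖gi i w - gi i wstar‖ ^ 2)
          + 2 * (c * ∑ i, ‖(gi i wt - gi i wstar) - m‖ ^ 2) := by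
      rw [Finset.sum_add_distrib]
      have e1 : ∑ i, 2 * ‖gi i w - gi i wstar‖ ^ 2 = 2 * ∑ i, ‖gi i w - gi i wstar‖ ^ 2 := by
        rw [Finset.mul_sum]
      have e2 : ∑ i, 2 * ‖(gi i wt - gi i wstar) - m‖ ^ 2
          = 2 * ∑ i, ‖(gi i wt - gi i wstar) - m‖ ^ 2 := by
        rw [Finset.mul_sum]
      rw [e1, e2]; ring
    rw [e] at h2
    have hA := hcocoavg w
    have hB := hcocoavg wt
    linarith [hvar_id]
  -- first-order bound at w
  have hlow_w : f w - f wstar ≤ ⟪a, gradient f w⟫ := by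
    have h := havg_low w wstar
    have e : ⟪gradient f w, wstar - w⟫ = -⟪gradient f w, a⟫ := by
      rw [ha, ← inner_neg_right]
      congr 1
      abel
    rw [e] at h
    rw [real_inner_comm]
    linarith
  -- finish
  show c * ∑ i, ‖w - α • v i - wstar‖ ^ 2
      ≤ ‖a‖ ^ 2 - 2 * α * (1 - 2 * L * α) * (f w - f wstar)
        + 4 * L * α ^ 2 * (f wt - f wstar)
  rw [hmain_eq]
  have hh1 := mul_le_mul_of_nonneg_left hvarsum (sq_nonneg α)
  have hh2 := mul_le_mul_of_nonneg_left hlow_w (by positivity : (0:ℝ) ≤ 2 * α)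
  nlinarith [hh1, hh2]
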